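/- Every maximal independent set of a whiskered graph w(H) on 2n vertices has exactly n elements; equivalently, the independence complex of w(H) is pure of dimension n−1. -/

import Mathlib

def whisker {n : ℕ} (H : SimpleGraph (Fin n)) : SimpleGraph (Fin n ⊕ Fin n) :=
  SimpleGraph.fromRel (fun u v =>
    (∃ i j, H.Adj i j ∧ u = Sum.inl i ∧ v = Sum.inl j) ∨ ∃ i, u = Sum.inl i ∧ v = Sum.inr i)

def IsIndep {V : Type*} (G : SimpleGraph V) (S : Set V) : Prop :=
  ∀ u ∈ S, ∀ v ∈ S, ¬ G.Adj u v

/-- A maximal independent set: an independent set not properly contained in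
another independent set. -/
def MaxIndep {V : Type*} [DecidableEq V] (G : SimpleGraph V) (F : Finset V) : Prop :=
  IsIndep G ↑F ∧ ∀ F' : Finset V, IsIndep G ↑F' → F ⊆ F' → F = F'

/-- Every maximal independent set of a whiskered graph `w(H)` on `2n` vertices
has exactly `n` elements: the independence complex of `w(H)` is pure of
dimension `n - 1`. -/
theorem maxIndep_whisker_card {n : ℕ} (H : SimpleGraph (Fin n))
    (F : Finset (Fin n ⊕ Fin n)) (hF : MaxIndep (whisker H) F) :
    F.card = n := by
  classical
  obtain ⟨hind, hmax⟩ := hF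
  -- adjacency facts
  have hadj_inl_inr : ∀ i : Fin n, (whisker H).Adj (Sum.inl i) (Sum.inr i) := by
    intro i
    refine ⟨by simp, ?_⟩
    exact Or.inl (Or.inr ⟨i, rfl, rfl⟩)
  have hadj_inr : ∀ (i : Fin n) (w : Fin n ⊕ Fin n),
      (whisker H).Adj (Sum.inr i) w → w = Sum.inl i := by
    intro i w hw
    rcases hw with ⟨hne, h | h⟩
    · rcases h with ⟨a, b, _, h1, _⟩ | ⟨a, h1, _⟩ <;> simp at h1
    · rcases h with ⟨a, b, _, _, h2⟩ | ⟨a, h1, h2⟩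
      · simp at h2
      · simp only [Sum.inr.injEq] at h2; subst h2; exact h1
  -- each fiber hits F
  set g : Fin n → Fin n ⊕ Fin n := fun i => if Sum.inl i ∈ F then Sum.inl i else Sum.inr i with hg
  have hgF : ∀ i, g i ∈ F := by
    intro i
    by_cases h : Sum.inl i ∈ F
    · simpa [hg, h] using h
    · simp only [hg, h, if_false]
      by_contra hr
      have hind' : IsIndep (whisker H) ↑(insert (Sum.inr i) F) := by
        intro u hu v hv huv
        simp only [Finset.coe_insert, Set.mem_insert_iff, Finset.mem_coe] at hu hv
        rcases hu with rfl | hu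
        · rcases hv with rfl | hv
          · exact (whisker H).loopless.irrefl _ huv
          · have := hadj_inr i v huv
            subst this; exact h hv
        · rcases hv with rfl | hv
          · have := hadj_inr i u huv.symm
            subst this; exact h hu
          · exact hind u hu v hv huv
      have := hmax _ hind' (Finset.subset_insert _ _)
      exact hr (this ▸ Finset.mem_insert_self _ _)
  have hginj : Function.Injective g := by
    intro a b hab
    simp only [hg] at hab
    split_ifs at hab <;> simp_all
  have hsub : F ⊆ Finset.image g Finset.univ := by
    intro x hx
    rcases x with i | i
    · have : g i = Sum.inl i := by simp [hg, hx]
      exact Finset.mem_image.2 ⟨i, Finset.mem_univ _, this⟩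
    · have hli : Sum.inl i ∉ F := by
        intro hli
        exact hind _ hli _ hx (hadj_inl_inr i)
      have : g i = Sum.inr i := by simp [hg, hli]
      exact Finset.mem_image.2 ⟨i, Finset.mem_univ _, this⟩
  have heq : F = Finset.image g Finset.univ := by
    apply Finset.Subset.antisymm hsub
    intro x hx
    rcases Finset.mem_image.1 hx with ⟨i, _, rfl⟩
    exact hgF i
  rw [heq, Finset.card_image_of_injective _ hginj, Finset.card_univ, Fintype.card_fin]
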